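/- In the 3DM-gadget NTU LP game, if S ⊆ H ∪ T is a blocking coalition against the all-ones utility vector u*, then for every node player h ∈ S ∩ H there exists an edge player t ∈ S ∩ T such that h is contained in the edge t. -/

import Mathlib

open Finset

/-- Membership of a node in a (hyper)edge given as a triple. -/
def memEdge {V : Type*} (h : V) (t : V × V × V) : Prop :=
  h = t.1 ∨ h = t.2.1 ∨ h = t.2.2

instance {V : Type*} [DecidableEq V] (h : V) (t : V × V × V) : Decidable (memEdge h t) := by
  unfold memEdge; infer_instance

/-- The valuations in the 3DM-gadget NTU LP game.  Players are node players
(elements of `Hset`) or edge players (indices `Fin m` of edges `T`); goods are the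
`m` edge goods together with one extra good. -/
noncomputable def gadgetVal {V : Type*} [DecidableEq V] (n m : ℕ)
    (Hset : Finset V) (T : Fin m → V × V × V) :
    ({h : V // h ∈ Hset} ⊕ Fin m) → (Fin m ⊕ Unit) → ℝ
  | Sum.inl h, Sum.inl j =>
      if memEdge h.1 (T j) then 1 / (4 * (n : ℝ) - 1)
      else (1 / (4 * (n : ℝ))) * (1 - 1 / (2 * ((n : ℝ) - 1) * (4 * (n : ℝ) - 1)))
  | Sum.inl _, Sum.inr _ => 1 / (3 * (n : ℝ) + (m : ℝ))
  | Sum.inr e, Sum.inl j => if j = e then (n : ℝ) / (4 * (n : ℝ) - 1) else 0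
  | Sum.inr _, Sum.inr _ => 1 / (3 * (n : ℝ) + (m : ℝ))

/-- A coalition `S` of the 3DM-gadget game blocks the all-ones utility vector `u*`
if some `x ∈ X(S)` (i.e. `x ≥ 0` with `∑ⱼ xⱼ ≤ |S|`) gives every member of `S`
utility strictly greater than `1`. -/
noncomputable def blocksAllOnes {V : Type*} [DecidableEq V] (n m : ℕ)
    (Hset : Finset V) (T : Fin m → V × V × V)
    (S : Finset ({h : V // h ∈ Hset} ⊕ Fin m)) : Prop :=
  ∃ x : Fin m ⊕ Unit → ℝ, (∀ j, 0 ≤ x j) ∧ (∑ j, x j) ≤ (S.card : ℝ) ∧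
    ∀ i ∈ S, (1 : ℝ) < ∑ j, gadgetVal n m Hset T i j * x j

/-- In the 3DM-gadget NTU LP game, if `S` is a blocking coalition against the
all-ones utility vector, then every node player in `S` is contained in some edge
whose edge player also belongs to `S`. -/
theorem gadget_blocking_coalition_covered {V : Type*} [DecidableEq V] (n m : ℕ)
    (hn : 1 < n) (hnm : n ≤ m)
    (hineq : 1 / (3 * (n : ℝ) + (m : ℝ)) <
      (1 / (4 * (n : ℝ))) * (1 - 1 / (2 * ((n : ℝ) - 1) * (4 * (n : ℝ) - 1))))
    (Xs Ys Zs : Finset V) (hX : Xs.card = n) (hY : Ys.card = n) (hZ : Zs.card = n)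
    (hXY : Disjoint Xs Ys) (hXZ : Disjoint Xs Zs) (hYZ : Disjoint Ys Zs)
    (T : Fin m → V × V × V)
    (hT : ∀ e : Fin m, (T e).1 ∈ Xs ∧ (T e).2.1 ∈ Ys ∧ (T e).2.2 ∈ Zs)
    (S : Finset ({h : V // h ∈ Xs ∪ Ys ∪ Zs} ⊕ Fin m))
    (hS : S.Nonempty) (hblock : blocksAllOnes n m (Xs ∪ Ys ∪ Zs) T S) :
    ∀ h : {h : V // h ∈ Xs ∪ Ys ∪ Zs}, Sum.inl h ∈ S →
      ∃ e : Fin m, Sum.inr e ∈ S ∧ memEdge h.1 (T e) := by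
  intro h hhS
  by_contra hcon
  push_neg at hcon
  obtain ⟨x, hx0, hxsum, hux⟩ := hblock
  classical
  obtain ⟨N, hN⟩ : ∃ r : ℝ, r = (n : ℝ) := ⟨_, rfl⟩
  obtain ⟨M, hM⟩ : ∃ r : ℝ, r = (m : ℝ) := ⟨_, rfl⟩
  rw [← hN, ← hM] at hineq
  have hN2 : (2:ℝ) ≤ N := by rw [hN]; exact_mod_cast hn
  have hMN : N ≤ M := by rw [hN, hM]; exact_mod_cast hnm
  have hd1 : (0:ℝ) < 4*N - 1 := by linarith
  have hd2 : (0:ℝ) < N - 1 := by linarith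
  have hd3 : (0:ℝ) < 3*N + M := by linarith
  have hd4 : (0:ℝ) < 4*N := by linarith
  obtain ⟨ε, hε⟩ : ∃ r : ℝ, r = 1 / (2 * (N - 1) * (4 * N - 1)) := ⟨_, rfl⟩
  obtain ⟨b, hb⟩ : ∃ r : ℝ, r = 1 / (4 * N) * (1 - ε) := ⟨_, rfl⟩
  obtain ⟨a, ha⟩ : ∃ r : ℝ, r = 1 / (4 * N - 1) := ⟨_, rfl⟩
  obtain ⟨c, hc⟩ : ∃ r : ℝ, r = 1 / (3 * N + M) := ⟨_, rfl⟩
  obtain ⟨β, hβ⟩ : ∃ r : ℝ, r = 1 / (2 * N * (N - 1)) := ⟨_, rfl⟩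
  rw [← hε, ← hb, ← hc] at hineq
  have ha0 : (0:ℝ) < a := by rw [ha]; positivity
  have hc0 : (0:ℝ) < c := by rw [hc]; positivity
  have hε0 : (0:ℝ) < ε := by rw [hε]; positivity
  have hβ0 : (0:ℝ) < β := by rw [hβ]; positivity
  have hcb : c < b := hineq
  have hba : b ≤ a := by
    have h1 : b ≤ 1 / (4*N) := by
      have hp : (0:ℝ) < 1/(4*N) := by positivity
      rw [hb]
      nlinarith [hε0, hp]
    have h2 : (1:ℝ) / (4*N) ≤ 1 / (4*N-1) := by
      apply one_div_le_one_div_of_le hd1; linarith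
    rw [ha]; linarith
  have hca : c ≤ a := le_trans hcb.le hba
  have key_a : a * (4*N - 1) = 1 := by rw [ha]; field_simp
  have key_c : c * (3*N + M) = 1 := by rw [hc]; field_simp
  -- coalition structure
  obtain ⟨SH, hSH⟩ : ∃ F : Finset {h : V // h ∈ Xs ∪ Ys ∪ Zs}, F = univ.filter (fun z => Sum.inl z ∈ S) := ⟨_, rfl⟩
  obtain ⟨ST, hST⟩ : ∃ F : Finset (Fin m), F = univ.filter (fun e => Sum.inr e ∈ S) := ⟨_, rfl⟩
  have hSeq : S = SH.image Sum.inl ∪ ST.image Sum.inr := by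
    ext i
    cases i with
    | inl z => simp [hSH, hST]
    | inr e => simp [hSH, hST]
  have hdisj : Disjoint (SH.image Sum.inl) (ST.image Sum.inr) := by
    simp only [Finset.disjoint_left, mem_image]
    rintro i ⟨z, _, rfl⟩ ⟨e, _, hh⟩
    exact Sum.inl_ne_inr hh.symm
  have hScard : S.card = SH.card + ST.card := by
    rw [hSeq, card_union_of_disjoint hdisj, card_image_of_injective _ Sum.inl_injective,
      card_image_of_injective _ Sum.inr_injective]
  have hp3n : SH.card ≤ 3 * n := by
    have h1 : SH.card ≤ Fintype.card {h : V // h ∈ Xs ∪ Ys ∪ Zs} := by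
      rw [hSH]; exact (card_filter_le _ _).trans (le_of_eq (card_univ))
    have h2 : Fintype.card {h : V // h ∈ Xs ∪ Ys ∪ Zs} = (Xs ∪ Ys ∪ Zs).card :=
      Fintype.card_coe _
    have h3 : (Xs ∪ Ys ∪ Zs).card ≤ 3 * n := by
      calc (Xs ∪ Ys ∪ Zs).card ≤ (Xs ∪ Ys).card + Zs.card := card_union_le _ _
        _ ≤ Xs.card + Ys.card + Zs.card := by linarith [card_union_le Xs Ys]
        _ = 3 * n := by rw [hX, hY, hZ]; ring
    omega
  have hkm : ST.card ≤ m := by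
    have h1 : ST.card ≤ Fintype.card (Fin m) := by
      rw [hST]; exact (card_filter_le _ _).trans (le_of_eq (card_univ))
    simpa using h1
  -- goods sums
  obtain ⟨A, hA⟩ : ∃ r : ℝ, r = ∑ j ∈ univ.filter (fun j : Fin m => memEdge h.1 (T j)), x (Sum.inl j) := ⟨_, rfl⟩
  obtain ⟨B, hB⟩ : ∃ r : ℝ, r = ∑ j ∈ univ.filter (fun j : Fin m => ¬ memEdge h.1 (T j)), x (Sum.inl j) := ⟨_, rfl⟩
  obtain ⟨w, hw⟩ : ∃ r : ℝ, r = x (Sum.inr ()) := ⟨_, rfl⟩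
  obtain ⟨K, hK⟩ : ∃ r : ℝ, r = ∑ e ∈ ST, x (Sum.inl e) := ⟨_, rfl⟩
  have hA0 : (0:ℝ) ≤ A := by rw [hA]; exact sum_nonneg fun j _ => hx0 _
  have hB0 : (0:ℝ) ≤ B := by rw [hB]; exact sum_nonneg fun j _ => hx0 _
  have hw0 : (0:ℝ) ≤ w := by rw [hw]; exact hx0 _
  have hK0 : (0:ℝ) ≤ K := by rw [hK]; exact sum_nonneg fun j _ => hx0 _
  have hAB : A + B = ∑ j : Fin m, x (Sum.inl j) := by
    rw [hA, hB]; exact sum_filter_add_sum_filter_not _ _ _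
  have hbudget : A + B + w ≤ (S.card : ℝ) := by
    have : ∑ j : Fin m ⊕ Unit, x j = (∑ j : Fin m, x (Sum.inl j)) + x (Sum.inr ()) := by
      rw [Fintype.sum_sum_type]; simp
    rw [hAB, hw]; rw [this] at hxsum; linarith
  have hKB : K ≤ B := by
    rw [hK, hB]
    apply sum_le_sum_of_subset_of_nonneg
    · intro e he
      rw [hST] at he
      simp only [mem_filter, mem_univ, true_and] at he ⊢
      exact hcon e he
    · intro j _ _; exact hx0 _
  -- node utility
  have hnode : 1 < a * A + b * B + c * w := by
    have hu := hux (Sum.inl h) hhS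
    rw [Fintype.sum_sum_type] at hu
    simp only [gadgetVal] at hu
    rw [← hN, ← hM] at hu
    rw [← hε, ← hb, ← ha, ← hc] at hu
    have e0 : ∑ j : Fin m, (if memEdge h.1 (T j) then a else b) * x (Sum.inl j)
        = a * A + b * B := by
      rw [← sum_filter_add_sum_filter_not univ (fun j : Fin m => memEdge h.1 (T j))]
      congr 1
      · rw [hA, mul_sum]
        apply sum_congr rfl
        intro j hj
        rw [if_pos (mem_filter.mp hj).2]
      · rw [hB, mul_sum]
        apply sum_congr rfl
        intro j hj
        rw [if_neg (mem_filter.mp hj).2]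
    rw [e0] at hu
    rw [hw]
    simpa using hu
  -- edge utilities
  have hedge : ∀ t ∈ ST, 1 < N * a * x (Sum.inl t) + c * w := by
    intro t ht
    have htS : Sum.inr t ∈ S := by rw [hST] at ht; exact (mem_filter.mp ht).2
    have hu := hux (Sum.inr t) htS
    rw [Fintype.sum_sum_type] at hu
    simp only [gadgetVal] at hu
    rw [← hN, ← hM] at hu
    rw [← hc] at hu
    have e0 : ∑ j : Fin m, (if j = t then N / (4 * N - 1) else 0) * x (Sum.inl j)
        = N * a * x (Sum.inl t) := by
      rw [sum_eq_single t]
      · rw [if_pos rfl, ha]; ring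
      · intro j _ hj; rw [if_neg hj, zero_mul]
      · intro hj; exact absurd (mem_univ t) hj
    rw [e0] at hu
    rw [hw]
    simpa using hu
  have hedgesum : ST.Nonempty → (ST.card : ℝ) < N * a * K + (ST.card : ℝ) * (c * w) := by
    intro hne
    have h1 : ∑ t ∈ ST, (1:ℝ) < ∑ t ∈ ST, (N * a * x (Sum.inl t) + c * w) :=
      sum_lt_sum_of_nonempty hne hedge
    rw [sum_const, nsmul_eq_mul, mul_one, sum_add_distrib, sum_const, nsmul_eq_mul,
      ← mul_sum, ← hK] at h1
    linarith
  have hsup : (S.card : ℝ) ≤ 3 * N + M := by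
    have : (S.card : ℝ) ≤ 3 * (n:ℝ) + (m:ℝ) := by
      rw [hScard]; push_cast
      have := hp3n; have := hkm
      push_cast
      have c1 : (SH.card : ℝ) ≤ 3 * (n:ℝ) := by exact_mod_cast hp3n
      have c2 : (ST.card : ℝ) ≤ (m:ℝ) := by exact_mod_cast hkm
      linarith
    rw [hN, hM]; exact this
  -- main case analysis
  rcases Nat.lt_or_ge S.card (4 * n) with hcase | hcase
  · -- small coalition: the node player h alone cannot get utility > 1
    have hsle : (S.card : ℝ) ≤ 4 * N - 1 := by
      have h1 : (S.card:ℝ) + 1 ≤ 4 * (n:ℝ) := by exact_mod_cast hcase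
      rw [hN]; linarith
    have h1 : a * A + b * B + c * w ≤ a * (A + B + w) := by
      nlinarith only [mul_le_mul_of_nonneg_right hba hB0, mul_le_mul_of_nonneg_right hca hw0]
    have h2 : a * (A + B + w) ≤ a * (4*N - 1) :=
      mul_le_mul_of_nonneg_left (hbudget.trans hsle) ha0.le
    linarith only [hnode, h1, h2, key_a]
  · have hs0 : (0:ℝ) < (S.card : ℝ) := by
      have : 0 < S.card := card_pos.mpr hS
      exact_mod_cast this
    have hsge : 4 * N ≤ (S.card : ℝ) := by
      have : (4 * n : ℕ) ≤ S.card := hcase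
      rw [hN]; exact_mod_cast this
    rcases le_or_gt (S.card * n) (ST.card * (4 * n - 1)) with h2a | h2b
    · -- many edge players: edge players together overrun the budget
      have hk1 : 0 < ST.card := by
        rcases Nat.eq_zero_or_pos ST.card with h0 | h0
        · exfalso
          rw [h0, zero_mul, Nat.le_zero, Nat.mul_eq_zero] at h2a
          rcases h2a with h0' | h0'
          · have := card_pos.mpr hS; omega
          · omega
        · exact h0
      have hlt := hedgesum (card_pos.mp hk1)
      have h2a' : (S.card : ℝ) * N ≤ (ST.card : ℝ) * (4 * N - 1) := by
        have := h2a
        have hcast : ((S.card * n : ℕ) : ℝ) ≤ ((ST.card * (4 * n - 1) : ℕ) : ℝ) := by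
          exact_mod_cast this
        push_cast [Nat.cast_sub (by omega : 1 ≤ 4 * n)] at hcast
        rw [hN]; convert hcast using 2 <;> push_cast <;> ring
      have g1 : N * a * (S.card : ℝ) ≤ (ST.card : ℝ) := by
        nlinarith only [mul_le_mul_of_nonneg_left h2a' ha0.le, key_a,
          mul_le_mul_of_nonneg_right key_a.le (Nat.cast_nonneg ST.card)]
      have g2 : c * (S.card : ℝ) ≤ 1 := by
        nlinarith only [mul_le_mul_of_nonneg_left hsup hc0.le, key_c]
      have hKw : K + w ≤ (S.card : ℝ) := by linarith only [hKB, hbudget, hA0]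
      have hst0 : (0:ℝ) ≤ (ST.card : ℝ) := Nat.cast_nonneg _
      nlinarith only [mul_lt_mul_of_pos_right hlt hs0,
        mul_le_mul_of_nonneg_right g1 hK0,
        mul_le_mul_of_nonneg_left g2 (mul_nonneg hst0 hw0),
        mul_le_mul_of_nonneg_left hKw hst0]
    · -- the tight case: s = 4n, k = n
      have hsub : S.card ≤ ST.card + 3 * n := by omega
      have h2b' : (ST.card : ℝ) * (4 * N - 1) < (S.card : ℝ) * N := by
        have hcast : ((ST.card * (4 * n - 1) : ℕ) : ℝ) < ((S.card * n : ℕ) : ℝ) := by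
          exact_mod_cast h2b
        push_cast [Nat.cast_sub (by omega : 1 ≤ 4 * n)] at hcast
        rw [hN]; convert hcast using 2 <;> push_cast <;> ring
      have hsub' : (S.card : ℝ) ≤ (ST.card : ℝ) + 3 * N := by
        rw [hN]; exact_mod_cast hsub
      have hs4 : S.card = 4 * n := by
        have hup : S.card ≤ 4 * n := by
          by_contra hh
          push_neg at hh
          have h1 : (4 * N + 1) ≤ (S.card : ℝ) := by
            rw [hN]; exact_mod_cast hh
          nlinarith only [h2b', hN2, h1,
            mul_le_mul_of_nonneg_right (show (S.card:ℝ) - 3*N ≤ (ST.card:ℝ) by linarith only [hsub']) (le_of_lt hd1),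
            mul_le_mul_of_nonneg_right h1 (show (0:ℝ) ≤ 3*N - 1 by linarith only [hN2])]
        omega
      have hkn : ST.card = n := by
        have hs4' : (S.card : ℝ) = 4 * N := by rw [hN, hs4]; push_cast; ring
        have hkup : ST.card ≤ n := by
          by_contra hh
          push_neg at hh
          have h1 : (N + 1) ≤ (ST.card : ℝ) := by
            rw [hN]; exact_mod_cast hh
          rw [hs4'] at h2b'
          nlinarith only [h2b', hN2,
            mul_le_mul_of_nonneg_right h1 (le_of_lt hd1)]
        omega
      have hs4' : (S.card : ℝ) = 4 * N := by rw [hN, hs4]; push_cast; ring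
      have hkn' : (ST.card : ℝ) = N := by rw [hN, hkn]
      have hstne : ST.Nonempty := card_pos.mp (by omega)
      have h5 := hedgesum hstne
      rw [hkn'] at h5
      -- combined inequality
      have hcomb : 1 + N * β < (a * A + b * B + c * w) + β * (N * a * K + N * (c * w)) := by
        nlinarith only [mul_lt_mul_of_pos_left h5 hβ0, hnode]
      -- coefficient bounds, each times (4 N)
      have hNβ : N * β = 1 / (2 * (N - 1)) := by
        rw [hβ]; field_simp
      have u1 : a * (4 * N) ≤ 1 + N * β := by
        have e1 : a ≤ N * β := by
          rw [hNβ, ha]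
          apply one_div_le_one_div_of_le (by linarith) (by linarith)
        linarith only [e1, key_a]
      have u2 : b * (4 * N) ≤ 1 + N * β := by
        linarith only [mul_le_mul_of_nonneg_right hba (le_of_lt hd4), u1]
      have u3 : (b + β * (N * a)) * (4 * N) = 1 + N * β := by
        rw [hb, ha, hβ, hε]
        field_simp
        ring
      have u4 : (c + β * (N * c)) * (4 * N) ≤ 1 + N * β := by
        have hc4 : c * (4 * N) ≤ 1 := by
          nlinarith only [mul_le_mul_of_nonneg_left (show 4*N ≤ 3*N+M by linarith only [hMN]) hc0.le, key_c]
        have hβN : (0:ℝ) ≤ β * N := by positivity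
        nlinarith only [hc4, mul_le_mul_of_nonneg_left hc4 hβN]
      have hcoef0 : (0:ℝ) < 1 + N * β := by
        have : (0:ℝ) < N * β := by positivity
        linarith only [this]
      have hbud4 : A + B + w ≤ 4 * N := by rw [← hs4']; exact hbudget
      -- final contradiction
      nlinarith only [mul_le_mul_of_nonneg_right u1 hA0,
        mul_le_mul_of_nonneg_right u2 (sub_nonneg.mpr hKB),
        mul_le_mul_of_nonneg_right (le_of_eq u3) hK0,
        mul_le_mul_of_nonneg_right u4 hw0,
        mul_le_mul_of_nonneg_left hbud4 hcoef0.le,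
        mul_lt_mul_of_pos_right hcomb hd4]
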